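/- For n even and 0 ≤ T ≤ n/2, consider complete contractions of the form C = contr(∇²_{a₁b₁}φ ⊗ … ⊗ ∇²_{a_{n/2−T}b_{n/2−T}}φ ⊗ (Δφ)^T) on ℝ^n, where no factor ∇²φ among the first n/2−T is a pure trace Δφ. Evaluating such a contraction with the Hessian ∇²φ replaced by a symmetric matrix H (a pointwise algebraic substitution), the number T of trace factors tr(H) appearing is well-defined: two such contraction patterns with different values of T give linearly independent polynomial functions of the symmetric matrix H (for n ≥ 2). -/

import Mathlib

open Polynomial Matrix

lemma eval_deriv_prod_aux (μ : Multiset ℕ) (h1 : ∀ c ∈ μ, 1 ≤ c) :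
    ((μ.map fun c => (X : ℝ[X]) ^ c + 1).prod).eval 0 = 1 ∧
    (Polynomial.derivative (μ.map fun c => (X : ℝ[X]) ^ c + 1).prod).eval 0 = μ.count 1 := by
  induction μ using Multiset.induction with
  | empty => simp
  | cons c s ih =>
    have hc : 1 ≤ c := h1 c (Multiset.mem_cons_self _ _)
    obtain ⟨hs1, hs2⟩ := ih (fun x hx => h1 x (Multiset.mem_cons_of_mem hx))
    have e1 : ((X : ℝ[X]) ^ c + 1).eval 0 = 1 := by
      simp [zero_pow (by omega : c ≠ 0)]
    have e2 : (Polynomial.derivative ((X : ℝ[X]) ^ c + 1)).eval 0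
        = if c = 1 then (1:ℝ) else 0 := by
      rcases eq_or_lt_of_le hc with h | h
      · subst h; simp
      · rw [if_neg (by omega)]
        simp [Polynomial.derivative_X_pow, zero_pow (by omega : c - 1 ≠ 0)]
    constructor
    · simp [Multiset.prod_cons, e1, hs1]
    · simp only [Multiset.map_cons, Multiset.prod_cons, derivative_mul, eval_add, eval_mul,
        Multiset.count_cons, e1, e2, hs1, hs2]
      rcases eq_or_ne c 1 with h | h
      · simp [h, add_comm]
      · simp [h, Ne.symm h]

lemma trace_pow_diag (n : ℕ) (h2 : 2 ≤ n) (t : ℝ) (c : ℕ) (hc : 1 ≤ c) :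
    ((Matrix.diagonal (fun i : Fin n =>
        if i = ⟨0, by omega⟩ then t else if i = ⟨1, by omega⟩ then (1:ℝ) else 0)) ^ c).trace
      = t ^ c + 1 := by
  rw [Matrix.diagonal_pow, Matrix.trace_diagonal]
  have hne : (⟨0, by omega⟩ : Fin n) ≠ ⟨1, by omega⟩ := by
    simp [Fin.ext_iff]
  have : ∀ i : Fin n,
      ((fun i : Fin n => if i = ⟨0, by omega⟩ then t else if i = ⟨1, by omega⟩ then (1:ℝ) else 0) ^ c) i
      = (if i = (⟨0, by omega⟩ : Fin n) then t ^ c else 0)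
        + (if i = (⟨1, by omega⟩ : Fin n) then 1 else 0) := by
    intro i
    simp only [Pi.pow_apply]
    split_ifs with h1 h2'
    · exact absurd (h1 ▸ h2') hne
    · simp
    · simp
    · simp [zero_pow (by omega : c ≠ 0)]
  simp only [this, Finset.sum_add_distrib, Finset.sum_ite_eq' Finset.univ, Finset.mem_univ,
    if_true]

/-- Complete contraction patterns of `n/2` symmetric 2-tensors `H` on `ℝⁿ`
correspond to multisets of cycle lengths (with value `∏ tr(H^c)`); a factor is a
trace factor `tr H` exactly when its cycle has length 1.  Two such contraction
patterns with different numbers `T` of trace factors give linearly independent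
polynomial functions of the symmetric matrix `H`, for `n ≥ 2` even. -/
theorem trace_count_linear_independence (n : ℕ) (hn : Even n) (h2 : 2 ≤ n)
    (μ ν : Multiset ℕ)
    (hμ1 : ∀ c ∈ μ, 1 ≤ c) (hν1 : ∀ c ∈ ν, 1 ≤ c)
    (hμs : μ.sum = n / 2) (hνs : ν.sum = n / 2)
    (hT : μ.count 1 ≠ ν.count 1) :
    LinearIndependent ℝ
      ![(fun H : {H : Matrix (Fin n) (Fin n) ℝ // H.IsSymm} =>
          (μ.map fun c => (H.1 ^ c).trace).prod),
        (fun H : {H : Matrix (Fin n) (Fin n) ℝ // H.IsSymm} =>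
          (ν.map fun c => (H.1 ^ c).trace).prod)] := by
  rw [LinearIndependent.pair_iff]
  intro a b hab
  -- the diagonal test matrices
  set d : ℝ → Fin n → ℝ := fun t i =>
    if i = ⟨0, by omega⟩ then t else if i = ⟨1, by omega⟩ then (1:ℝ) else 0 with hd
  have hsym : ∀ t, (Matrix.diagonal (d t)).IsSymm := fun t => Matrix.isSymm_diagonal _
  set Pμ : ℝ[X] := (μ.map fun c => (X : ℝ[X]) ^ c + 1).prod with hPμ
  set Pν : ℝ[X] := (ν.map fun c => (X : ℝ[X]) ^ c + 1).prod with hPν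
  have key : ∀ (σ : Multiset ℕ) (hσ : ∀ c ∈ σ, 1 ≤ c) (t : ℝ),
      (σ.map fun c => ((Matrix.diagonal (d t)) ^ c).trace).prod
      = ((σ.map fun c => (X : ℝ[X]) ^ c + 1).prod).eval t := by
    intro σ hσ t
    rw [Polynomial.eval_multiset_prod, Multiset.map_map]
    refine congrArg Multiset.prod (Multiset.map_congr rfl ?_)
    intro c hcm
    simp only [Function.comp_apply, Polynomial.eval_add, Polynomial.eval_pow,
      Polynomial.eval_X, Polynomial.eval_one]
    exact trace_pow_diag n h2 t c (hσ c hcm)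
  have hzero : (Polynomial.C a * Pμ + Polynomial.C b * Pν) = 0 := by
    apply Polynomial.funext
    intro t
    have := congrFun hab ⟨Matrix.diagonal (d t), hsym t⟩
    simp only [Pi.add_apply, Pi.smul_apply, Pi.zero_apply, smul_eq_mul,
      Matrix.cons_val_zero, Matrix.cons_val_one, Matrix.head_cons] at this
    rw [key μ hμ1 t, key ν hν1 t] at this
    simp only [Polynomial.eval_add, Polynomial.eval_mul, Polynomial.eval_C,
      Polynomial.eval_zero, hPμ, hPν]
    linarith [this]
  obtain ⟨hμ0, hμ0'⟩ := eval_deriv_prod_aux μ hμ1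
  obtain ⟨hν0, hν0'⟩ := eval_deriv_prod_aux ν hν1
  have h1 : a + b = 0 := by
    have := congrArg (Polynomial.eval 0) hzero
    simp only [hPμ, hPν, Polynomial.eval_add, Polynomial.eval_mul, Polynomial.eval_C, hμ0, hν0,
      mul_one, Polynomial.eval_zero] at this
    linarith
  have h2' : a * μ.count 1 + b * ν.count 1 = 0 := by
    have := congrArg (fun p => (Polynomial.derivative p).eval 0) hzero
    simp only [Polynomial.derivative_add, Polynomial.derivative_mul, Polynomial.derivative_C,
      zero_mul, zero_add, Polynomial.eval_add, Polynomial.eval_mul, Polynomial.eval_C,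
      Polynomial.derivative_zero, Polynomial.eval_zero] at this
    rw [hμ0', hν0'] at this
    linarith [this]
  have ha : a = 0 := by
    have hb : b = -a := by linarith
    rw [hb] at h2'
    have hcc : (μ.count 1 : ℝ) ≠ (ν.count 1 : ℝ) := by
      exact_mod_cast hT
    have : a * ((μ.count 1 : ℝ) - ν.count 1) = 0 := by linarith
    rcases mul_eq_zero.mp this with h | h
    · exact h
    · exact absurd (by linarith) hcc
  exact ⟨ha, by linarith⟩
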